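/- Let E : ℕ → ℚ be the sequence of Euler (secant) numbers, determined by E₀ = 1 and Σ_{j=0}^{k} C(2k, 2j)·E_{2j} = 0 for every k ≥ 1. Then there exists η ∈ ℚ₂ such that for every sequence (k_j) of positive integers with k_j → ∞ (in ℝ) and ‖k_j + 1‖₂ → 0, the rationals E_{2k_j}/2, viewed in ℚ₂, converge to η. (This common limit is the 2-adic L-value L₂(2,χ), the 2-adic analogue of Catalan's constant, where χ is the primitive Dirichlet character modulo 4 and L(−2k,χ) = E_{2k}/2.) -/

import Mathlib

open Finset

def Eul : ℕ → ℤ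
  | 0 => 1
  | (n+1) =>
    if (n+1) % 2 = 1 then 0
    else -∑ t : Fin ((n+1)/2), ((n+1).choose (2*(t:ℕ)) : ℤ) * Eul (2*(t:ℕ))
decreasing_by have := t.isLt; omega

lemma Eul_zero : Eul 0 = 1 := by rw [Eul]

lemma Eul_odd (n : ℕ) (h : n % 2 = 1) : Eul n = 0 := by
  cases n with
  | zero => simp at h
  | succ m => rw [Eul, if_pos h]

lemma Eul_even_rec (k : ℕ) (hk : 1 ≤ k) :
    ∑ t ∈ range (k+1), ((2*k).choose (2*t) : ℤ) * Eul (2*t) = 0 := by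
  have h2k : 2*k = (2*k-1)+1 := by omega
  have hmod : (2*k) % 2 = 0 := by omega
  have hdef : Eul (2*k) = -∑ t ∈ range k, ((2*k).choose (2*t) : ℤ) * Eul (2*t) := by
    rw [h2k, Eul, if_neg (by omega), ← h2k]
    rw [show (2*k)/2 = k by omega]
    rw [Fin.sum_univ_eq_sum_range (fun t => ((2*k).choose (2*t) : ℤ) * Eul (2*t))]
  rw [Finset.sum_range_succ, Nat.choose_self]
  rw [hdef]; push_cast; ring

lemma lemK (r : ℕ) :
    ∑ j ∈ range (r+1), (r.choose j : ℤ) * Eul j * (1 + (-1)^(r-j)) =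
      if r = 0 then 2 else 0 := by
  rcases Nat.even_or_odd r with hr | hr
  · -- r even
    obtain ⟨k, hk⟩ := hr
    have hsum : ∑ j ∈ range (r+1), (r.choose j : ℤ) * Eul j * (1 + (-1)^(r-j)) =
        ∑ t ∈ range (k+1), 2 * ((r.choose (2*t) : ℤ) * Eul (2*t)) := by
      rw [← Finset.sum_filter_add_sum_filter_not (range (r+1)) (fun j => j % 2 = 0)]
      have h1 : ∑ j ∈ (range (r+1)).filter (fun j => ¬ j % 2 = 0),
          (r.choose j : ℤ) * Eul j * (1 + (-1)^(r-j)) = 0 := by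
        apply Finset.sum_eq_zero
        intro j hj
        simp only [Finset.mem_filter] at hj
        rw [Eul_odd j (by omega)]; ring
      rw [h1, add_zero]
      apply Finset.sum_nbij' (i := fun j => j / 2) (j := fun t => 2 * t)
      · intro j hj; simp only [Finset.mem_filter, Finset.mem_range] at hj ⊢; omega
      · intro t ht; simp only [Finset.mem_filter, Finset.mem_range] at ht ⊢; omega
      · intro j hj; simp only [Finset.mem_filter, Finset.mem_range] at hj; omega
      · intro t ht; omega
      · intro j hj
        simp only [Finset.mem_filter, Finset.mem_range] at hj
        rw [show 2 * (j/2) = j by omega]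
        have hev : Even (r-j) := by
          rcases Nat.even_or_odd (r-j) with h | h
          · exact h
          · exfalso
            have := (Nat.odd_sub (by omega : j ≤ r)).mp h
            simp only [Nat.even_iff, Nat.odd_iff] at *
            omega
        rw [hev.neg_one_pow]; ring
    rw [hsum, ← Finset.mul_sum]
    rcases Nat.eq_zero_or_pos k with hk0 | hk0
    · subst hk0; simp [hk, Eul_zero]
    · rw [if_neg (by omega)]
      have := Eul_even_rec k hk0
      rw [show k + k = 2*k from by omega] at hk
      rw [hk, this, mul_zero]
  · -- r odd
    have h0 : ∑ j ∈ range (r+1), (r.choose j : ℤ) * Eul j * (1 + (-1)^(r-j)) = 0 := by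
      apply Finset.sum_eq_zero
      intro j hj
      simp only [Finset.mem_range] at hj
      rcases Nat.even_or_odd j with hj2 | hj2
      · have hodd : Odd (r-j) := Nat.Odd.sub_even (by omega) hr hj2
        rw [hodd.neg_one_pow]; ring
      · rw [Eul_odd j (Nat.odd_iff.mp hj2)]; ring
    rw [h0, if_neg (by rintro rfl; simp [Nat.odd_iff] at hr)]

lemma expand_pm (x : ℤ) (r : ℕ) :
    (x+1)^r + (x-1)^r = ∑ i ∈ range (r+1), (r.choose i : ℤ) * x^i * (1 + (-1)^(r-i)) := by
  have h1 : (x+1)^r = ∑ i ∈ range (r+1), x^i * 1^(r-i) * (r.choose i : ℤ) := add_pow x 1 r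
  have h2 : (x-1)^r = ∑ i ∈ range (r+1), x^i * (-1)^(r-i) * (r.choose i : ℤ) := by
    have := add_pow x (-1) r
    simpa [sub_eq_add_neg] using this
  rw [h1, h2, ← Finset.sum_add_distrib]
  apply Finset.sum_congr rfl
  intro i _; ring

lemma lemF (n : ℕ) (x : ℤ) :
    ∑ j ∈ range (n+1), (n.choose j : ℤ) * Eul j * ((x+1)^(n-j) + (x-1)^(n-j)) = 2 * x^n := by
  have step1 : ∑ j ∈ range (n+1), (n.choose j : ℤ) * Eul j * ((x+1)^(n-j) + (x-1)^(n-j))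
      = ∑ j ∈ range (n+1), ∑ i ∈ range (n-j+1),
          (n.choose j : ℤ) * Eul j * (((n-j).choose i : ℤ) * x^i * (1 + (-1)^(n-j-i))) := by
    apply Finset.sum_congr rfl
    intro j _
    rw [expand_pm, Finset.mul_sum]
  rw [step1]
  rw [Finset.sum_comm' (t' := range (n+1)) (s' := fun i => range (n-i+1))
    (by intro j i; simp only [Finset.mem_range]; omega)]
  have step2 : ∀ i ∈ range (n+1), ∑ j ∈ range (n-i+1),
      (n.choose j : ℤ) * Eul j * (((n-j).choose i : ℤ) * x^i * (1 + (-1)^(n-j-i)))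
      = (n.choose i : ℤ) * x^i * (if n - i = 0 then 2 else 0) := by
    intro i hi
    simp only [Finset.mem_range] at hi
    have key : ∀ j ∈ range (n-i+1),
        (n.choose j : ℤ) * Eul j * (((n-j).choose i : ℤ) * x^i * (1 + (-1)^(n-j-i)))
        = (n.choose i : ℤ) * x^i * ((((n-i).choose j : ℤ)) * Eul j * (1 + (-1)^((n-i)-j))) := by
      intro j hj
      simp only [Finset.mem_range] at hj
      have hcc : (n.choose j) * ((n-j).choose i) = (n.choose i) * ((n-i).choose j) := by
        have e1 := Nat.choose_mul (n := n) (show j ≤ j + i by omega)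
        have e2 := Nat.choose_mul (n := n) (show i ≤ j + i by omega)
        have e3 : (j+i).choose j = (j+i).choose i := by
          rw [← Nat.choose_symm (show j ≤ j + i by omega)]
          congr 1; omega
        rw [show (j+i) - j = i from by omega] at e1
        rw [show (j+i) - i = j from by omega] at e2
        rw [e3] at e1
        omega
      have hexp : n - j - i = (n - i) - j := by omega
      rw [hexp]
      have : ((n.choose j : ℤ)) * ((n-j).choose i : ℤ) = ((n.choose i : ℤ)) * ((n-i).choose j : ℤ) := by
        exact_mod_cast congrArg (Nat.cast : ℕ → ℤ) hcc
      linear_combination (Eul j * x^i * (1+(-1:ℤ)^((n-i)-j))) * this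
    rw [Finset.sum_congr rfl key, ← Finset.mul_sum, lemK (n-i)]
  rw [Finset.sum_congr rfl step2]
  rw [Finset.sum_eq_single n]
  · simp [mul_comm]
  · intro i hi hne
    simp only [Finset.mem_range] at hi
    rw [if_neg (by omega), mul_zero]
  · intro h; simp at h

def Gf (N n : ℕ) : ℤ := ∑ j ∈ range (n+1), (n.choose j : ℤ) * Eul j * (2*(N:ℤ))^(n-j)

def Af (N n : ℕ) : ℤ := ∑ a ∈ range N, (-1)^a * (2*(a:ℤ)+1)^n

lemma Gf_zero (n : ℕ) : Gf 0 n = Eul n := by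
  unfold Gf
  rw [Finset.sum_eq_single n]
  · simp
  · intro j hj hne
    simp only [Finset.mem_range] at hj
    rw [show ((2:ℤ)*(0:ℕ)) = 0 by norm_num, zero_pow (by omega : n - j ≠ 0)]
    ring
  · intro h; simp at h

lemma Gf_step (N n : ℕ) : Gf (N+1) n + Gf N n = 2 * (2*(N:ℤ)+1)^n := by
  have := lemF n (2*(N:ℤ)+1)
  rw [show (2*(N:ℤ)+1)+1 = 2*((N:ℕ)+1 : ℕ) by push_cast; ring] at this
  rw [show (2*(N:ℤ)+1)-1 = 2*(N:ℤ) by ring] at this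
  unfold Gf
  rw [← Finset.sum_add_distrib, ← this]
  apply Finset.sum_congr rfl
  intro j _; push_cast; ring

lemma lemI (N n : ℕ) : 2 * Af N n = Eul n - (-1)^N * Gf N n := by
  induction N with
  | zero => simp [Af, Gf_zero]
  | succ m ih =>
    unfold Af at ih ⊢
    rw [Finset.sum_range_succ, mul_add, ih]
    have := Gf_step m n
    have hsign : ((-1:ℤ))^(m+1) = -(-1)^m := by ring
    rw [hsign]
    have : Gf (m+1) n = 2*(2*(m:ℤ)+1)^n - Gf m n := by linarith [Gf_step m n]
    rw [this]
    ring

lemma lemC1 (m k : ℕ) (hm : 1 ≤ m) :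
    (2:ℤ)^(2*m+2) ∣ 2 * Af (2^m) (2*k+1) + (2*(k:ℤ)+1) * Eul (2*k) * 2^(m+1) := by
  have hI := lemI (2^m) (2*k+1)
  have hodd : Eul (2*k+1) = 0 := Eul_odd _ (by omega)
  have hsign : ((-1:ℤ))^(2^m : ℕ) = 1 := by
    apply Even.neg_one_pow
    exact ⟨2^(m-1), by rw [← two_mul, ← pow_succ']; congr 1; omega⟩
  rw [hodd, hsign, one_mul, zero_sub] at hI
  set f : ℕ → ℤ := fun j => ((2*k+1).choose j : ℤ) * Eul j * (2*((2:ℤ)^m))^(2*k+1-j) with hf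
  have hmem : 2*k ∈ range (2*k+1+1) := by simp only [Finset.mem_range]; omega
  have hsplit := Finset.add_sum_erase (range (2*k+1+1)) f hmem
  have hGf : Gf (2^m) (2*k+1) = ∑ j ∈ range (2*k+1+1), f j := by
    unfold Gf
    apply Finset.sum_congr rfl
    intro j _
    rw [hf]
    push_cast
    ring
  have hfval : f (2*k) = (2*(k:ℤ)+1) * Eul (2*k) * 2^(m+1) := by
    show ((2*k+1).choose (2*k) : ℤ) * Eul (2*k) * (2*((2:ℤ)^m))^(2*k+1-2*k)
      = (2*(k:ℤ)+1) * Eul (2*k) * 2^(m+1)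
    rw [Nat.choose_succ_self_right, show 2*k+1-2*k = 1 from by omega, pow_one, pow_succ]
    push_cast
    ring
  have hR : (2:ℤ)^(2*m+2) ∣ ∑ j ∈ (range (2*k+1+1)).erase (2*k), f j := by
    apply Finset.dvd_sum
    intro j hj
    simp only [Finset.mem_erase, Finset.mem_range] at hj
    rcases Nat.even_or_odd j with hje | hjo
    · have hexp : 2 ≤ 2*k+1-j := by
        rcases hje with ⟨t, ht⟩; omega
      apply Dvd.dvd.mul_left
      calc (2:ℤ)^(2*m+2) = (2*(2:ℤ)^m)^2 := by ring
        _ ∣ (2*(2:ℤ)^m)^(2*k+1-j) := pow_dvd_pow _ hexp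
    · show (2:ℤ)^(2*m+2) ∣ ((2*k+1).choose j : ℤ) * Eul j * (2*((2:ℤ)^m))^(2*k+1-j)
      rw [Eul_odd j (Nat.odd_iff.mp hjo)]
      simp
  rw [hGf] at hI
  have hgoal : 2 * Af (2^m) (2*k+1) + (2*(k:ℤ)+1) * Eul (2*k) * 2^(m+1)
      = -(∑ j ∈ (range (2*k+1+1)).erase (2*k), f j) := by
    rw [← hfval]
    linarith [hI, hsplit]
  rw [hgoal]
  exact hR.neg_right

lemma lemL (M : ℕ) (x : ℤ) (hx : Odd x) : (2:ℤ)^(M+3) ∣ x^(2^(M+1)) - 1 := by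
  induction M with
  | zero =>
    obtain ⟨t, ht⟩ := hx
    have : x^(2^1) - 1 = 4*(t*(t+1)) := by rw [ht]; ring
    rw [this]
    rcases Int.even_mul_succ_self t with ⟨c, hc⟩
    rw [hc]
    exact ⟨c, by ring⟩
  | succ M ih =>
    have hfac : x^(2^(M+2)) - 1 = (x^(2^(M+1)) - 1) * (x^(2^(M+1)) + 1) := by
      rw [show (2:ℕ)^(M+2) = 2^(M+1) * 2 from by rw [pow_succ]]
      rw [pow_mul]; ring
    rw [hfac, pow_succ]
    apply mul_dvd_mul ih
    -- 2 ∣ x^(2^(M+1)) + 1 since x odd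
    have : Odd (x^(2^(M+1))) := hx.pow
    obtain ⟨c, hc⟩ := this
    exact ⟨c+1, by omega⟩

lemma lemC2 (M : ℕ) (x : ℤ) (hx : Odd x) (n n' : ℕ) (hle : n' ≤ n)
    (hdvd : 2^(M+1) ∣ n - n') : (2:ℤ)^(M+3) ∣ x^n - x^n' := by
  obtain ⟨t, ht⟩ := hdvd
  have hn : n = n' + 2^(M+1) * t := by omega
  have : x^n - x^n' = x^n' * ((x^(2^(M+1)))^t - 1^t) := by
    rw [hn, pow_add, pow_mul]; ring
  rw [this]
  apply Dvd.dvd.mul_left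
  exact dvd_trans (lemL M x hx) (dvd_trans (sub_dvd_pow_sub_pow _ _ t) (by norm_num))

lemma lemC2A (M N : ℕ) (n n' : ℕ) (hle : n' ≤ n) (hdvd : 2^(M+1) ∣ n - n') :
    (2:ℤ)^(M+3) ∣ Af N n - Af N n' := by
  unfold Af
  rw [← Finset.sum_sub_distrib]
  apply Finset.dvd_sum
  intro a _
  have : (-1:ℤ)^a * (2*(a:ℤ)+1)^n - (-1)^a * (2*(a:ℤ)+1)^n'
      = (-1)^a * ((2*(a:ℤ)+1)^n - (2*(a:ℤ)+1)^n') := by ring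
  rw [this]
  exact (lemC2 M _ ⟨a, by ring⟩ n n' hle hdvd).mul_left _

def dEul (k : ℕ) : ℤ := (2*(k:ℤ)+1) * Eul (2*k)

lemma lemP (m k k' : ℕ) (hm : 1 ≤ m) (hle : k' ≤ k) (hdvd : (2:ℤ)^(2*m) ∣ (k:ℤ) - k') :
    (2:ℤ)^(m+1) ∣ dEul k - dEul k' := by
  have hnat : 2^(2*m) ∣ (k - k') := by
    have : ((2^(2*m) : ℕ) : ℤ) ∣ (((k - k' : ℕ)) : ℤ) := by
      push_cast [Nat.cast_sub hle]
      exact hdvd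
    exact_mod_cast this
  have hn : 2^(2*m+1) ∣ ((2*k+1) - (2*k'+1)) := by
    obtain ⟨t, ht⟩ := hnat
    refine ⟨t, ?_⟩
    have h2 : 2*k+1 - (2*k'+1) = 2*(k - k') := by omega
    rw [h2, ht, pow_succ]
    ring
  have hA := lemC2A (2*m) (2^m) (2*k+1) (2*k'+1) (by omega) hn
  have h1 := lemC1 m k hm
  have h2 := lemC1 m k' hm
  have hA2 : (2:ℤ)^(2*m+2) ∣ 2*(Af (2^m) (2*k+1) - Af (2^m) (2*k'+1)) := by
    refine Dvd.dvd.mul_left ?_ 2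
    exact dvd_trans (pow_dvd_pow 2 (by omega)) hA
  have hsub := (h1.sub h2).sub hA2
  have heq : 2 * Af (2^m) (2*k+1) + (2*(k:ℤ)+1) * Eul (2*k) * 2^(m+1)
      - (2 * Af (2^m) (2*k'+1) + (2*(k':ℤ)+1) * Eul (2*k') * 2^(m+1))
      - 2*(Af (2^m) (2*k+1) - Af (2^m) (2*k'+1))
      = (dEul k - dEul k') * 2^(m+1) := by
    unfold dEul; ring
  rw [heq] at hsub
  obtain ⟨c, hc⟩ := hsub
  refine ⟨c, ?_⟩
  have h2ne : ((2:ℤ)^(m+1)) ≠ 0 := by positivity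
  apply mul_right_cancel₀ h2ne
  rw [hc]
  ring

lemma normP (m k k' : ℕ) (hm : 1 ≤ m) (hdvd : (2:ℤ)^(2*m) ∣ (k:ℤ) - (k':ℤ)) :
    ‖((dEul k : ℤ) : ℚ_[2]) - ((dEul k' : ℤ) : ℚ_[2])‖ ≤ ((2:ℕ):ℝ)^(-((m+1:ℕ)):ℤ) := by
  have key : (2:ℤ)^(m+1) ∣ dEul k - dEul k' := by
    rcases le_total k' k with h | h
    · exact lemP m k k' hm h hdvd
    · have h2 := lemP m k' k hm h
        (by rw [show (k':ℤ) - k = -((k:ℤ) - k') from by ring]; exact hdvd.neg_right)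
      obtain ⟨c, hc⟩ := h2
      exact ⟨-c, by rw [show dEul k - dEul k' = -(dEul k' - dEul k) from by ring, hc]; ring⟩
  have hle := (Padic.norm_int_le_pow_iff_dvd (p := 2) (dEul k - dEul k') (m+1)).mpr
    (by exact_mod_cast key)
  rw [show ((dEul k - dEul k' : ℤ) : ℚ_[2]) = ((dEul k : ℤ):ℚ_[2]) - ((dEul k' : ℤ):ℚ_[2])
    from by push_cast; ring] at hle
  exact hle

noncomputable def useq : ℕ → ℚ_[2] := fun i => ((dEul (2^(2*i+1) - 1) : ℤ) : ℚ_[2])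

lemma pow_bound (N : ℕ) : ((2:ℕ):ℝ)^(-((N+1:ℕ)):ℤ) ≤ 2*(1/2:ℝ)^N := by
  have e : ((2:ℕ):ℝ)^(-((N+1:ℕ)):ℤ) = (1/2:ℝ)^(N+1) := by
    rw [zpow_neg, zpow_natCast, one_div, inv_pow]
    norm_num
  rw [e, pow_succ]
  nlinarith [pow_pos (by norm_num : (0:ℝ) < 1/2) N]

lemma useq_tendsto : ∃ δ : ℚ_[2], Filter.Tendsto useq Filter.atTop (nhds δ) := by
  have hub : ∀ i j N, N ≤ i → N ≤ j → dist (useq i) (useq j) ≤ 2*(1/2:ℝ)^N := by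
    intro i j N hi hj
    rcases Nat.eq_zero_or_pos N with rfl | hN
    · rw [dist_eq_norm, show useq i - useq j
        = ((dEul (2^(2*i+1)-1) - dEul (2^(2*j+1)-1) : ℤ) : ℚ_[2]) from by
          unfold useq; push_cast; ring]
      have h1 := Padic.norm_int_le_one (p := 2) (dEul (2^(2*i+1)-1) - dEul (2^(2*j+1)-1))
      calc ‖((dEul (2^(2*i+1)-1) - dEul (2^(2*j+1)-1) : ℤ) : ℚ_[2])‖ ≤ 1 := h1
        _ ≤ 2*(1/2:ℝ)^0 := by norm_num
    · have hdvd : (2:ℤ)^(2*N) ∣ ((2^(2*i+1) - 1 : ℕ) : ℤ) - ((2^(2*j+1) - 1 : ℕ) : ℤ) := by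
        have h1 : ((2^(2*i+1) - 1 : ℕ) : ℤ) = 2^(2*i+1) - 1 := by
          push_cast [Nat.cast_sub (Nat.one_le_two_pow)]; ring
        have h2 : ((2^(2*j+1) - 1 : ℕ) : ℤ) = 2^(2*j+1) - 1 := by
          push_cast [Nat.cast_sub (Nat.one_le_two_pow)]; ring
        rw [h1, h2, show (2:ℤ)^(2*i+1) - 1 - ((2:ℤ)^(2*j+1) - 1)
          = 2^(2*i+1) - 2^(2*j+1) from by ring]
        exact dvd_sub (pow_dvd_pow 2 (by omega)) (pow_dvd_pow 2 (by omega))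
      have := normP N _ _ hN hdvd
      rw [dist_eq_norm]
      exact le_trans this (pow_bound N)
  have hb0 : Filter.Tendsto (fun N => 2*(1/2:ℝ)^N) Filter.atTop (nhds 0) := by
    simpa using (tendsto_pow_atTop_nhds_zero_of_lt_one (by norm_num : (0:ℝ) ≤ 1/2)
      (by norm_num : (1/2:ℝ) < 1)).const_mul 2
  exact cauchySeq_tendsto_of_complete (cauchySeq_of_le_tendsto_0 _ hub hb0)

lemma E_eq (E : ℕ → ℚ) (hE0 : E 0 = 1)
    (hE : ∀ k : ℕ, 1 ≤ k →
      ∑ j ∈ Finset.range (k + 1), (Nat.choose (2 * k) (2 * j) : ℚ) * E (2 * j) = 0) :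
    ∀ k, E (2*k) = ((Eul (2*k) : ℤ) : ℚ) := by
  intro k
  induction k using Nat.strong_induction_on with
  | _ k ih =>
    rcases Nat.eq_zero_or_pos k with rfl | hk
    · simpa [Eul_zero] using hE0
    · have h := hE k hk
      rw [Finset.sum_range_succ, Nat.choose_self] at h
      have hcast := congrArg (fun z : ℤ => (z : ℚ)) (Eul_even_rec k hk)
      push_cast at hcast
      rw [Finset.sum_range_succ, Nat.choose_self] at hcast
      have hsum : ∑ j ∈ Finset.range k, ((2*k).choose (2*j) : ℚ) * E (2*j)
          = ∑ j ∈ Finset.range k, ((2*k).choose (2*j) : ℚ) * ((Eul (2*j) : ℤ) : ℚ) := by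
        apply Finset.sum_congr rfl
        intro j hj
        rw [ih j (Finset.mem_range.mp hj)]
      rw [hsum] at h
      push_cast at h hcast ⊢
      linarith [h, hcast]

theorem stmt_16 (E : ℕ → ℚ) (hE0 : E 0 = 1)
    (hE : ∀ k : ℕ, 1 ≤ k →
      ∑ j ∈ Finset.range (k + 1), (Nat.choose (2 * k) (2 * j) : ℚ) * E (2 * j) = 0) :
    ∃ η : ℚ_[2], ∀ k : ℕ → ℕ, (∀ j, 0 < k j) →
      Filter.Tendsto (fun j => (k j : ℝ)) Filter.atTop Filter.atTop →
      Filter.Tendsto (fun j => ‖(k j : ℚ_[2]) + 1‖) Filter.atTop (nhds 0) →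
      Filter.Tendsto (fun j => ((E (2 * k j) / 2 : ℚ) : ℚ_[2])) Filter.atTop (nhds η) := by
  have hEeq := E_eq E hE0 hE
  obtain ⟨δ, hδ⟩ := useq_tendsto
  refine ⟨δ / ((2*(-1)+1)*2), ?_⟩
  intro k hkpos _ hknorm
  -- Step A: d (k j) → δ
  have hdk : Filter.Tendsto (fun j => ((dEul (k j) : ℤ) : ℚ_[2])) Filter.atTop (nhds δ) := by
    rw [Metric.tendsto_atTop]
    intro ε hε
    obtain ⟨n0, hn0⟩ := exists_pow_lt_of_lt_one (half_pos hε) (by norm_num : (1/2:ℝ) < 1)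
    set m := n0 + 1 with hm
    have hmb : ((2:ℕ):ℝ)^(-((m+1:ℕ)):ℤ) < ε/2 := by
      have e : ((2:ℕ):ℝ)^(-((m+1:ℕ)):ℤ) = (1/2:ℝ)^(m+1) := by
        rw [zpow_neg, zpow_natCast, one_div, inv_pow]; norm_num
      rw [e]
      calc (1/2:ℝ)^(m+1) ≤ (1/2:ℝ)^n0 :=
            pow_le_pow_of_le_one (by norm_num) (by norm_num) (by omega)
        _ < ε/2 := hn0
    rw [Metric.tendsto_atTop] at hδ
    obtain ⟨N1, hN1⟩ := hδ (ε/2) (half_pos hε)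
    set i := max m N1 with hi
    have hnormev := hknorm.eventually (gt_mem_nhds
      (show (0:ℝ) < ((2:ℕ):ℝ)^(-((2*m:ℕ)):ℤ) by positivity))
    rw [Filter.eventually_atTop] at hnormev
    obtain ⟨N2, hN2⟩ := hnormev
    refine ⟨N2, fun j hj => ?_⟩
    have hnorm2 : ‖((k j : ℚ_[2]) + 1)‖ ≤ ((2:ℕ):ℝ)^(-((2*m:ℕ)):ℤ) := le_of_lt (hN2 j hj)
    have hdvd1 : (2:ℤ)^(2*m) ∣ (k j : ℤ) + 1 := by
      have hc : ((k j : ℚ_[2]) + 1) = (((k j : ℤ) + 1 : ℤ) : ℚ_[2]) := by push_cast; ring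
      rw [hc] at hnorm2
      exact_mod_cast (Padic.norm_int_le_pow_iff_dvd (p := 2) _ _).mp hnorm2
    have hdvd : (2:ℤ)^(2*m) ∣ (k j : ℤ) - ((2^(2*i+1) - 1 : ℕ) : ℤ) := by
      have hcast : ((2^(2*i+1) - 1 : ℕ) : ℤ) = 2^(2*i+1) - 1 := by
        push_cast [Nat.cast_sub (Nat.one_le_two_pow)]; ring
      rw [hcast, show (k j : ℤ) - ((2:ℤ)^(2*i+1) - 1)
        = ((k j : ℤ) + 1) - 2^(2*i+1) from by ring]
      exact dvd_sub hdvd1 (pow_dvd_pow 2 (by omega))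
    have hd1 := normP m (k j) (2^(2*i+1) - 1) (by omega) hdvd
    have hd2 := hN1 i (le_max_right _ _)
    calc dist ((dEul (k j) : ℚ_[2])) δ
        ≤ dist ((dEul (k j) : ℚ_[2])) (useq i) + dist (useq i) δ := dist_triangle _ _ _
      _ < ε/2 + ε/2 := by
          apply add_lt_add_of_le_of_lt _ hd2
          rw [dist_eq_norm]
          exact le_trans hd1 (le_of_lt hmb)
      _ = ε := add_halves ε
  -- Step B
  have heq : ∀ j, ((dEul (k j) : ℤ) : ℚ_[2]) / ((2*((k j : ℕ) : ℚ_[2])+1)*2)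
      = ((E (2 * k j) / 2 : ℚ) : ℚ_[2]) := by
    intro j
    have hne : (2*((k j : ℕ) : ℚ_[2])+1) ≠ 0 := by
      have h1 : (((2*(k j)+1 : ℕ)) : ℚ_[2]) ≠ 0 := Nat.cast_ne_zero.mpr (by omega)
      push_cast at h1
      exact h1
    rw [hEeq (k j)]
    unfold dEul
    push_cast
    field_simp
  have hden : Filter.Tendsto (fun j => ((2*((k j : ℕ) : ℚ_[2])+1)*2)) Filter.atTop
      (nhds ((2*(-1)+1)*2)) := by
    have hk2 : Filter.Tendsto (fun j => ((k j : ℕ) : ℚ_[2])) Filter.atTop (nhds (-1)) := by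
      rw [tendsto_iff_dist_tendsto_zero]
      simpa [dist_eq_norm, sub_neg_eq_add] using hknorm
    have := ((hk2.const_mul 2).add_const 1).mul_const 2
    simpa using this
  have hfinal := hdk.div hden (by norm_num)
  exact hfinal.congr heq
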